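/- If the range of ρ^{1/2} is dense in h, then the ρ-Choi-Jamiołkowski map Φ_* ↦ J_ρ(Φ_*) = (I ⊗ Φ_*)(ω_ρ) is injective on bounded completely positive maps on L₁(h). -/

import Mathlib

open scoped InnerProductSpace

/-- If the range of `ρ^{1/2}` is all of `h`, then the `ρ`-Choi-Jamiołkowski map
`Φ_* ↦ J_ρ(Φ_*) = (I ⊗ Φ_*)(ω_ρ)` is injective on bounded completely positive maps on
`L₁(h)`.  The trace-class space `L₁(h)` is axiomatized as a Banach space `T₁` with an
injective continuous inclusion `ev` into `B(h)`, containing the rank-one operators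
`rk2 x y = |x⟩⟨y|` whose "diagonal" elements `|x⟩⟨x|` are total in `T₁`; the CJ operators
`WΦ = J_ρ(Φ_*)`, `WΨ = J_ρ(Ψ_*)` are given by their quadratic forms on simple tensors. -/
theorem jamiolkowski_injective
    {H : Type*} [NormedAddCommGroup H] [InnerProductSpace ℂ H] [CompleteSpace H]
    {K : Type*} [NormedAddCommGroup K] [InnerProductSpace ℂ K] [CompleteSpace K]
    (tp : H →ₗ[ℂ] H →ₗ[ℂ] K)
    (htp : ∀ u v u' v' : H, ⟪tp u v, tp u' v'⟫_ℂ = ⟪u, u'⟫_ℂ * ⟪v, v'⟫_ℂ)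
    {ι : Type*} (e : HilbertBasis ι ℂ H)
    (θ : H → H)
    (hbij : Function.Bijective θ)
    (hadd : ∀ u v : H, θ (u + v) = θ u + θ v)
    (hsmul : ∀ (c : ℂ) (u : H), θ (c • u) = (starRingEnd ℂ c) • θ u)
    (hinner : ∀ u v : H, ⟪θ u, θ v⟫_ℂ = ⟪v, u⟫_ℂ)
    (hθe : ∀ i : ι, θ (e i) = e i)
    (ρ sq : H →L[ℂ] H) (hρ : ρ.IsPositive)
    (hρtr : HasSum (fun i : ι => ⟪e i, ρ (e i)⟫_ℂ) 1)
    (hsqpos : sq.IsPositive) (hsq : sq ∘L sq = ρ)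
    (hrange : Set.range sq = Set.univ)
    {T₁ : Type*} [NormedAddCommGroup T₁] [NormedSpace ℂ T₁] [CompleteSpace T₁]
    (ev : T₁ →L[ℂ] (H →L[ℂ] H)) (hev : Function.Injective ev)
    (rk2 : H → H → T₁)
    (hrk2 : ∀ x y : H, ev (rk2 x y) = ((innerSL ℂ) y).smulRight x)
    (hspan : (Submodule.span ℂ {z : T₁ | ∃ x : H, z = rk2 x x}).topologicalClosure = ⊤)
    (Φ Ψ : T₁ →L[ℂ] T₁)
    (WΦ WΨ : K →L[ℂ] K)
    (hWΦ : ∀ u v : H, ⟪tp u v, WΦ (tp u v)⟫_ℂ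
      = ⟪v, (ev (Φ (rk2 (sq (θ u)) (sq (θ u))))) v⟫_ℂ)
    (hWΨ : ∀ u v : H, ⟪tp u v, WΨ (tp u v)⟫_ℂ
      = ⟪v, (ev (Ψ (rk2 (sq (θ u)) (sq (θ u))))) v⟫_ℂ)
    (hJeq : WΦ = WΨ) :
    Φ = Ψ := by
  have key : ∀ x : H, Φ (rk2 x x) = Ψ (rk2 x x) := by
    intro x
    obtain ⟨y, hy⟩ : ∃ y, sq y = x := by
      have : x ∈ Set.range sq := by rw [hrange]; trivial
      exact this
    obtain ⟨u, hu⟩ := hbij.surjective y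
    have hquad : ∀ v : H, ⟪v, (ev (Φ (rk2 x x))) v⟫_ℂ = ⟪v, (ev (Ψ (rk2 x x))) v⟫_ℂ := by
      intro v
      have h1 := hWΦ u v
      have h2 := hWΨ u v
      rw [hJeq] at h1
      rw [hu, hy] at h1 h2
      rw [← h1, h2]
    apply hev
    have := (ext_inner_map ((ev (Φ (rk2 x x))) : H →ₗ[ℂ] H)
      ((ev (Ψ (rk2 x x))) : H →ₗ[ℂ] H)).mp (fun v => by
        have := congrArg (starRingEnd ℂ) (hquad v)
        simpa [inner_conj_symm] using this)
    exact ContinuousLinearMap.coe_injective this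
  have hker : (Submodule.span ℂ {z : T₁ | ∃ x : H, z = rk2 x x}) ≤
      LinearMap.ker ((Φ - Ψ : T₁ →L[ℂ] T₁) : T₁ →ₗ[ℂ] T₁) := by
    rw [Submodule.span_le]
    rintro z ⟨x, rfl⟩
    simp [LinearMap.mem_ker, ContinuousLinearMap.sub_apply, key x, sub_eq_zero]
  have hker' : (Submodule.span ℂ {z : T₁ | ∃ x : H, z = rk2 x x}).topologicalClosure ≤
      LinearMap.ker ((Φ - Ψ : T₁ →L[ℂ] T₁) : T₁ →ₗ[ℂ] T₁) :=
    Submodule.topologicalClosure_minimal _ hker (ContinuousLinearMap.isClosed_ker (Φ - Ψ))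
  rw [hspan] at hker'
  ext z
  have hz : z ∈ LinearMap.ker ((Φ - Ψ : T₁ →L[ℂ] T₁) : T₁ →ₗ[ℂ] T₁) := hker' trivial
  have := LinearMap.mem_ker.mp hz
  simpa [sub_eq_zero] using this
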